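/- Let f and g be string-to-string functions with origin information over the same input alphabet A and output alphabet B. If f(v̄ | a | w̄) = g(v̄ | a | w̄) for all strings v, w ∈ List A and all letters a ∈ A, then f = g, i.e. f(w) = g(w) (the same output string with the same origins) for every input string w. In other words, a string-to-string function with origin information is uniquely determined by its characteristic function. -/

import Mathlib

/-- Index of the part containing (0-based) position `i`, where `ls` is the list of
lengths of the parts of the input. Positions beyond all parts get index `ls.length`. -/
def partOf : List ℕ → ℕ → ℕ
  | [], _ => 0
  | l :: ls, i => if i < l then 0 else partOf ls (i - l) + 1

/-- `f` is a string-to-string function with origin information: every origin occurring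
in the output of `f` on `w` is a position of `w`. -/
def HasOrigins {A B : Type} (f : List A → List (B × ℕ)) : Prop :=
  ∀ w : List A, ∀ p ∈ f w, p.2 < w.length

/-- The blocks of the factored output of `f` for the factorization `parts` of the input:
each output letter of `f` on the concatenation of the parts is classified by the index of
the part containing its origin, maximal consecutive runs with the same classification are
grouped into blocks, and each block is recorded as its part index together with the string
of output letters it carries. -/
def blocksOf {A B : Type} (f : List A → List (B × ℕ)) (parts : List (List A)) :
    List (ℕ × List B) :=
  (((f parts.flatten).map fun p => (partOf (parts.map List.length) p.2, p.1)).splitBy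
    (fun x y => x.1 == y.1)).map fun blk => ((blk.map Prod.fst).headD 0, blk.map Prod.snd)

/-- The factored output of `f` for the factorization `parts`, where the contents of
blocks whose part index satisfies `erased` are erased (only the label is kept). -/
def factored {A B : Type} (f : List A → List (B × ℕ)) (parts : List (List A))
    (erased : ℕ → Bool) : List (ℕ × Option (List B)) :=
  (blocksOf f parts).map fun b => (b.1, if erased b.1 then none else some b.2)

/-- The left derivative `∂_v f`, i.e. `w ↦ f(v̄ | w)`. -/
def leftDeriv {A B : Type} (f : List A → List (B × ℕ)) (v : List A) :
    List A → List (ℕ × Option (List B)) :=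
  fun w => factored f [v, w] (· == 0)

/-- The right derivative `f∂_w`, i.e. `v ↦ f(v | w̄)`. -/
def rightDeriv {A B : Type} (f : List A → List (B × ℕ)) (w : List A) :
    List A → List (ℕ × Option (List B)) :=
  fun v => factored f [v, w] (· == 1)

/-- `f(v̄ | a | w̄)`: the factored output of `f(v·a·w)` for the split `(v, a, w)`
with the contents of the `v`-blocks and the `w`-blocks erased. -/
def charVal {A B : Type} (f : List A → List (B × ℕ)) (a : A) (v w : List A) :
    List (ℕ × Option (List B)) :=
  factored f [v, [a], w] (fun k => !(k == 1))

/-- A language is regular if it is accepted by a DFA with finitely many states. -/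
def IsRegularLang {A : Type} (L : Set (List A)) : Prop :=
  ∃ (Q : Type) (_ : Fintype Q) (M : DFA A Q), M.accepts = L

/-- A colouring of strings is regular if it has finite image and all its preimages
are regular languages. -/
def IsRegularColouring {A X : Type} (g : List A → X) : Prop :=
  (Set.range g).Finite ∧ ∀ x : X, IsRegularLang {w | g w = x}

/-- A colouring of pairs of strings is regular if it factors through a pair of
regular colourings of strings. -/
def IsRegularColouring₂ {A X : Type} (g : List A → List A → X) : Prop :=
  ∃ (X₁ X₂ : Type) (g₁ : List A → X₁) (g₂ : List A → X₂),
    IsRegularColouring g₁ ∧ IsRegularColouring g₂ ∧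
    ∀ v v' w w', g₁ v = g₁ v' → g₂ w = g₂ w' → g v w = g v' w'

/-- `listPow v i` is the `i`-fold concatenation `v^i`. -/
def listPow {A : Type} (v : List A) (i : ℕ) : List A := (List.replicate i v).flatten

namespace StsAux

variable {α : Type*} {B : Type}

/-! ### grouping bridge with splitBy -/

def consFst (a : α) : List (List α) → List (List α)
  | [] => [[a]]
  | g :: gs => (a :: g) :: gs

def grp (R : α → α → Bool) : α → List α → List (List α)
  | a, [] => [[a]]
  | a, b :: t => if R a b then consFst a (grp R b t) else [a] :: grp R b t

def prepFst (p : List α) : List (List α) → List (List α)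
  | [] => [p]
  | g :: gs => (p ++ g) :: gs

lemma grp_ne_nil (R : α → α → Bool) (a : α) (t : List α) : grp R a t ≠ [] := by
  cases t with
  | nil => simp [grp]
  | cons b t =>
    simp only [grp]
    split
    · cases grp R b t <;> simp [consFst]
    · simp

lemma prepFst_nil {G : List (List α)} (h : G ≠ []) : prepFst [] G = G := by
  cases G with
  | nil => exact absurd rfl h
  | cons g gs => simp [prepFst]

lemma prepFst_append (p : List α) (a : α) (G : List (List α)) :
    prepFst (p ++ [a]) G = prepFst p (consFst a G) := by
  cases G <;> simp [prepFst, consFst]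

lemma loop_spec (R : α → α → Bool) :
    ∀ (t : List α) (a : α) (g : List α) (gs : List (List α)),
      List.splitBy.loop R t a g gs = gs.reverse ++ prepFst g.reverse (grp R a t) := by
  intro t
  induction t with
  | nil => intro a g gs; simp [List.splitBy.loop, grp, prepFst]
  | cons b t ih =>
    intro a g gs
    rw [List.splitBy.loop]
    cases hR : R a b with
    | true =>
      simp only [ih b (a :: g) gs, grp, hR, if_true]
      rw [List.reverse_cons, prepFst_append]
    | false =>
      simp only [ih b [] ((a :: g).reverse :: gs), grp, hR, if_false]
      rw [List.reverse_nil, prepFst_nil (grp_ne_nil R b t)]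
      cases G : grp R b t with
      | nil => exact absurd G (grp_ne_nil R b t)
      | cons g' gs' => simp [prepFst]

lemma splitBy_eq_grp (R : α → α → Bool) (a : α) (t : List α) :
    List.splitBy R (a :: t) = grp R a t := by
  show List.splitBy.loop R t a [] [] = _
  rw [loop_spec]
  simp [prepFst_nil (grp_ne_nil R a t)]


/-! ### red : front-recursive run-grouping on labelled letters -/

def gcons (x : ℕ × List B) : List (ℕ × List B) → List (ℕ × List B)
  | [] => [x]
  | y :: r => if x.1 = y.1 then (x.1, x.2 ++ y.2) :: r else x :: y :: r

def red : List (ℕ × B) → List (ℕ × List B)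
  | [] => []
  | x :: t => gcons (x.1, [x.2]) (red t)

lemma grp_first (R : α → α → Bool) :
    ∀ (t : List α) (a : α), ∃ g gs, grp R a t = (a :: g) :: gs := by
  intro t
  induction t with
  | nil => intro a; exact ⟨[], [], rfl⟩
  | cons b t ih =>
    intro a
    obtain ⟨g, gs, hg⟩ := ih b
    simp only [grp]
    split
    · rw [hg]; exact ⟨b :: g, gs, rfl⟩
    · exact ⟨[], grp R b t, rfl⟩

def Fblk (blk : List (ℕ × B)) : ℕ × List B :=
  ((blk.map Prod.fst).headD 0, blk.map Prod.snd)

lemma map_F_grp :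
    ∀ (t : List (ℕ × B)) (x : ℕ × B),
      (grp (fun p q => p.1 == q.1) x t).map Fblk = red (x :: t) := by
  intro t
  induction t with
  | nil => intro x; simp [grp, red, gcons, Fblk]
  | cons y t ih =>
    intro x
    obtain ⟨g, gs, hg⟩ := grp_first (fun p q : ℕ × B => p.1 == q.1) t y
    have hred : red (y :: t) = (y.1, y.2 :: g.map Prod.snd) :: gs.map Fblk := by
      rw [← ih y, hg]; simp [Fblk]
    simp only [grp]
    split
    · next hxy =>
      rw [beq_iff_eq] at hxy
      rw [hg]
      show Fblk (x :: y :: g) :: gs.map Fblk = red (x :: y :: t)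
      rw [show red (x :: y :: t) = gcons (x.1, [x.2]) (red (y :: t)) from rfl, hred]
      simp [gcons, hxy, Fblk]
    · next hxy =>
      rw [beq_iff_eq] at hxy
      rw [hg]
      show Fblk [x] :: Fblk (y :: g) :: gs.map Fblk = red (x :: y :: t)
      rw [show red (x :: y :: t) = gcons (x.1, [x.2]) (red (y :: t)) from rfl, hred]
      simp [gcons, hxy, Fblk]

lemma splitBy_blocks (m : List (ℕ × B)) :
    (m.splitBy (fun p q => p.1 == q.1)).map Fblk = red m := by
  cases m with
  | nil => rfl
  | cons x t => rw [splitBy_eq_grp, map_F_grp]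


def glue (bs ys : List (ℕ × List B)) : List (ℕ × List B) := bs.foldr gcons ys

@[simp] lemma glue_nil (ys : List (ℕ × List B)) : glue [] ys = ys := rfl

@[simp] lemma glue_cons (b : ℕ × List B) (bs ys : List (ℕ × List B)) :
    glue (b :: bs) ys = gcons b (glue bs ys) := rfl

lemma gcons_shape (c : ℕ) (X : List (ℕ × List B)) :
    ∃ e Y, ∀ s' : List B, gcons (c, s') X = (c, s' ++ e) :: Y := by
  cases X with
  | nil => exact ⟨[], [], fun s' => by simp [gcons]⟩
  | cons y r =>
    by_cases h : c = y.1
    · exact ⟨y.2, r, fun s' => by simp [gcons, h]⟩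
    · exact ⟨[], y :: r, fun s' => by simp [gcons, h]⟩

lemma gcons_glue (z : ℕ × List B) (bs ys : List (ℕ × List B)) :
    glue (gcons z bs) ys = gcons z (glue bs ys) := by
  cases bs with
  | nil => rfl
  | cons y r =>
    obtain ⟨c, s⟩ := y
    obtain ⟨e, Y, hE⟩ := gcons_shape c (glue r ys)
    by_cases h : z.1 = c
    · show glue (gcons z ((c, s) :: r)) ys = gcons z (gcons (c, s) (glue r ys))
      rw [show gcons z ((c, s) :: r) = (z.1, z.2 ++ s) :: r by simp [gcons, h]]
      rw [glue_cons, hE s]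
      rw [show (z.1, z.2 ++ s) = (c, z.2 ++ s) by rw [h], hE (z.2 ++ s)]
      simp [gcons, h, List.append_assoc]
    · show glue (gcons z ((c, s) :: r)) ys = gcons z (gcons (c, s) (glue r ys))
      rw [show gcons z ((c, s) :: r) = z :: (c, s) :: r by simp [gcons, h]]
      rfl

lemma red_append (p q : List (ℕ × B)) : red (p ++ q) = glue (red p) (red q) := by
  induction p with
  | nil => rfl
  | cons x p ih =>
    show red (x :: (p ++ q)) = glue (red (x :: p)) (red q)
    rw [show red (x :: (p ++ q)) = gcons (x.1, [x.2]) (red (p ++ q)) from rfl, ih,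
      show red (x :: p) = gcons (x.1, [x.2]) (red p) from rfl, gcons_glue]

lemma chain'_gcons (z : ℕ × List B) (X : List (ℕ × List B))
    (h : X.Chain' (fun a b => a.1 ≠ b.1)) :
    (gcons z X).Chain' (fun a b => a.1 ≠ b.1) := by
  cases X with
  | nil => simp [gcons, List.Chain']
  | cons y r =>
    by_cases hz : z.1 = y.1
    · rw [show gcons z (y :: r) = (z.1, z.2 ++ y.2) :: r by simp [gcons, hz]]
      rw [List.Chain', List.isChain_cons] at h ⊢
      exact ⟨fun b hb => hz ▸ h.1 b hb, h.2⟩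
    · rw [show gcons z (y :: r) = z :: y :: r by simp [gcons, hz]]
      exact List.IsChain.cons_cons hz h

lemma chain'_red (m : List (ℕ × B)) : (red m).Chain' (fun a b => a.1 ≠ b.1) := by
  induction m with
  | nil => simp [red, List.Chain']
  | cons x t ih => exact chain'_gcons _ _ ih

lemma red_first (γ : ℕ) (β : B) (t : List (ℕ × B)) :
    ∃ s rest, red ((γ, β) :: t) = (γ, β :: s) :: rest := by
  obtain ⟨e, Y, hE⟩ := gcons_shape γ (red t)
  exact ⟨e, Y, by rw [show red ((γ, β) :: t) = gcons (γ, [β]) (red t) from rfl, hE]; rfl⟩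

lemma red_last : ∀ (m : List (ℕ × B)) (h : m ≠ []),
    ∃ pre s, red m = pre ++ [((m.getLast h).1, s)] := by
  intro m
  induction m with
  | nil => intro h; exact absurd rfl h
  | cons x t ih =>
    intro h
    cases t with
    | nil => exact ⟨[], [x.2], by simp [red, gcons]⟩
    | cons y t' =>
      obtain ⟨pre, s, hps⟩ := ih (by simp)
      rw [List.getLast_cons (by simp)]
      set lt := ((y :: t').getLast (by simp)).1 with hlt
      rw [show red (x :: y :: t') = gcons (x.1, [x.2]) (red (y :: t')) from rfl, hps]
      cases pre with
      | nil =>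
        by_cases hx : x.1 = lt
        · exact ⟨[], x.2 :: s, by simp [gcons, hx]⟩
        · exact ⟨[(x.1, [x.2])], s, by simp [gcons, hx]⟩
      | cons hd pre' =>
        by_cases hx : x.1 = hd.1
        · exact ⟨(x.1, x.2 :: hd.2) :: pre', s, by simp [gcons, hx]⟩
        · exact ⟨(x.1, [x.2]) :: hd :: pre', s, by simp [gcons, hx]⟩


/-! ### the erasure map and crux lemmas -/

def er (b : ℕ × List B) : ℕ × Option (List B) :=
  (b.1, if b.1 = 1 then some b.2 else none)

lemma crux_blocks :
    ∀ (ibs : List (ℕ × List B)) (lc : ℕ) (ls : List B) (γ : ℕ) (β : B) (s : List B)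
      (rest : List (ℕ × List B)) (γ' : ℕ) (β' : B) (s' : List B) (rest' : List (ℕ × List B)),
      (ibs ++ [(lc, ls)]).Chain' (fun a b => a.1 ≠ b.1) →
      (glue (ibs ++ [(lc, ls)]) ((γ, β :: s) :: rest)).map er =
        (glue (ibs ++ [(lc, ls)]) ((γ', β' :: s') :: rest')).map er →
      (lc = 1 ∨ (γ ≠ lc ∧ γ' ≠ lc)) → γ = γ' ∧ (γ = 1 → β = β') := by
  intro ibs
  induction ibs with
  | nil =>
    intro lc ls γ β s rest γ' β' s' rest' _ heq hcond
    simp only [List.nil_append, glue_cons, glue_nil] at heq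
    by_cases h1 : lc = γ <;> by_cases h2 : lc = γ'
    · rw [show gcons (lc, ls) ((γ, β :: s) :: rest) = (lc, ls ++ β :: s) :: rest by
        simp [gcons, h1]] at heq
      rw [show gcons (lc, ls) ((γ', β' :: s') :: rest') = (lc, ls ++ β' :: s') :: rest' by
        simp [gcons, h2]] at heq
      refine ⟨h1 ▸ h2, fun hγ => ?_⟩
      rw [← h1] at hγ
      simp only [List.map_cons, er, hγ, if_true, List.cons.injEq, Prod.mk.injEq] at heq
      have := heq.1.2
      simp only [Option.some.injEq, List.append_cancel_left_eq, List.cons.injEq] at this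
      exact this.1
    · -- lc = γ, lc ≠ γ' : need lc = 1 branch impossible; cond forces lc = 1
      rcases hcond with hc | hc
      · rw [show gcons (lc, ls) ((γ, β :: s) :: rest) = (lc, ls ++ β :: s) :: rest by
          simp [gcons, h1]] at heq
        rw [show gcons (lc, ls) ((γ', β' :: s') :: rest') = (lc, ls) :: (γ', β' :: s') :: rest' by
          simp [gcons, h2]] at heq
        simp only [List.map_cons, er, hc, if_true, List.cons.injEq, Prod.mk.injEq] at heq
        have := heq.1.2
        rw [Option.some_inj] at this
        have hlen := congrArg List.length this
        simp at hlen
      · exact absurd h1.symm hc.1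
    · rcases hcond with hc | hc
      · rw [show gcons (lc, ls) ((γ, β :: s) :: rest) = (lc, ls) :: (γ, β :: s) :: rest by
          simp [gcons, h1]] at heq
        rw [show gcons (lc, ls) ((γ', β' :: s') :: rest') = (lc, ls ++ β' :: s') :: rest' by
          simp [gcons, h2]] at heq
        simp only [List.map_cons, er, hc, if_true, List.cons.injEq, Prod.mk.injEq] at heq
        have := heq.1.2
        rw [Option.some_inj] at this
        have hlen := congrArg List.length this
        simp at hlen
      · exact absurd h2.symm hc.2
    · rw [show gcons (lc, ls) ((γ, β :: s) :: rest) = (lc, ls) :: (γ, β :: s) :: rest by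
        simp [gcons, h1]] at heq
      rw [show gcons (lc, ls) ((γ', β' :: s') :: rest') = (lc, ls) :: (γ', β' :: s') :: rest' by
        simp [gcons, h2]] at heq
      simp only [List.map_cons, List.cons.injEq] at heq
      have h2nd := heq.2.1
      simp only [er, Prod.mk.injEq] at h2nd
      refine ⟨h2nd.1, fun hγ => ?_⟩
      have := h2nd.2
      rw [hγ, ← h2nd.1, hγ, if_pos rfl, if_pos rfl] at this
      simp only [Option.some.injEq, List.cons.injEq] at this
      exact this.1
  | cons z ibs2 ih =>
    intro lc ls γ β s rest γ' β' s' rest' hch heq hcond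
    obtain ⟨hd, tl, hE⟩ : ∃ hd tl, ibs2 ++ [(lc, ls)] = hd :: tl := by
      cases ibs2 with
      | nil => exact ⟨(lc, ls), [], rfl⟩
      | cons a l => exact ⟨a, l ++ [(lc, ls)], rfl⟩
    have hch2 : (ibs2 ++ [(lc, ls)]).Chain' (fun a b => a.1 ≠ b.1) := by
      rw [List.cons_append] at hch
      exact hch.tail
    have hzhd : z.1 ≠ hd.1 := by
      rw [List.cons_append, hE, List.Chain', List.isChain_cons_cons] at hch
      exact hch.1
    have key : ∀ Y : List (ℕ × List B),
        glue ((z :: ibs2) ++ [(lc, ls)]) Y = z :: glue (ibs2 ++ [(lc, ls)]) Y := by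
      intro Y
      rw [List.cons_append, glue_cons]
      obtain ⟨e, Y2, hsh⟩ := gcons_shape hd.1 (glue tl Y)
      have : glue (ibs2 ++ [(lc, ls)]) Y = (hd.1, hd.2 ++ e) :: Y2 := by
        rw [hE, glue_cons, ← hsh hd.2]
      rw [this]
      simp [gcons, hzhd]
    rw [key, key, List.map_cons, List.map_cons] at heq
    exact ih lc ls γ β s rest γ' β' s' rest' hch2 (List.tail_eq_of_cons_eq heq) hcond

lemma crux_nil (γ : ℕ) (β : B) (r : List (ℕ × B)) (γ' : ℕ) (β' : B) (r' : List (ℕ × B))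
    (heq : (red ((γ, β) :: r)).map er = (red ((γ', β') :: r')).map er) :
    γ = γ' ∧ (γ = 1 → β = β') := by
  obtain ⟨s, rest, h1⟩ := red_first γ β r
  obtain ⟨s', rest', h2⟩ := red_first γ' β' r'
  rw [h1, h2] at heq
  simp only [List.map_cons, List.cons.injEq, er, Prod.mk.injEq] at heq
  refine ⟨heq.1.1, fun hγ => ?_⟩
  have := heq.1.2
  rw [hγ, ← heq.1.1, hγ, if_pos rfl, if_pos rfl] at this
  simp only [Option.some.injEq, List.cons.injEq] at this
  exact this.1


/-! ### classification by a split position -/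

def cls (i o : ℕ) : ℕ := if o < i then 0 else if o = i then 1 else 2

lemma cls_self (i : ℕ) : cls i i = 1 := by simp [cls]

lemma cls_eq_one_iff {i o : ℕ} : cls i o = 1 ↔ o = i := by
  unfold cls
  rcases Nat.lt_trichotomy o i with h|h|h
  · rw [if_pos h]; constructor <;> intro h2 <;> omega
  · simp [h]
  · rw [if_neg (by omega), if_neg (by omega)]; constructor <;> intro h2 <;> omega

lemma cls_of_lt {i o : ℕ} (h : o < i) : cls i o = 0 := by simp [cls, h]

lemma cls_of_gt {i o : ℕ} (h : i < o) : cls i o = 2 := by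
  unfold cls; split_ifs <;> omega

lemma lt_of_cls_eq_zero {i o : ℕ} (h : cls i o = 0) : o < i := by
  by_contra hc
  unfold cls at h; split_ifs at h <;> omega

lemma gt_of_cls_eq_two {i o : ℕ} (h : cls i o = 2) : i < o := by
  by_contra hc
  unfold cls at h; split_ifs at h <;> omega

def mp (i : ℕ) (L : List (B × ℕ)) : List (ℕ × B) := L.map fun p => (cls i p.2, p.1)

def Phi (i : ℕ) (L : List (B × ℕ)) : List (ℕ × Option (List B)) := (red (mp i L)).map er

lemma crux_elem (i : ℕ) (P R R' : List (B × ℕ)) (x x' : B × ℕ) (hP : P ≠ [])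
    (heq : Phi i (P ++ x :: R) = Phi i (P ++ x' :: R'))
    (hcond : cls i (P.getLast hP).2 = 1 ∨
      (cls i x.2 ≠ cls i (P.getLast hP).2 ∧ cls i x'.2 ≠ cls i (P.getLast hP).2)) :
    cls i x.2 = cls i x'.2 ∧ (cls i x.2 = 1 → x.1 = x'.1) := by
  have hmp : mp i P ≠ [] := by simp [mp, hP]
  obtain ⟨pre, ls, hpre⟩ := red_last (mp i P) hmp
  have hlast : ((mp i P).getLast hmp).1 = cls i (P.getLast hP).2 := by
    simp [mp, List.getLast_map]
  have hdec : ∀ (z : B × ℕ) (Q : List (B × ℕ)),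
      mp i (P ++ z :: Q) = mp i P ++ (cls i z.2, z.1) :: mp i Q := by
    intro z Q; simp [mp]
  obtain ⟨s1, rest1, hr1⟩ := red_first (cls i x.2) x.1 (mp i R)
  obtain ⟨s1', rest1', hr1'⟩ := red_first (cls i x'.2) x'.1 (mp i R')
  have hch := chain'_red (mp i P)
  rw [hpre, hlast] at hch
  have e1 : red (mp i (P ++ x :: R)) =
      glue (pre ++ [(cls i (P.getLast hP).2, ls)]) ((cls i x.2, x.1 :: s1) :: rest1) := by
    rw [hdec, red_append, hpre, hlast, hr1]
  have e1' : red (mp i (P ++ x' :: R')) =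
      glue (pre ++ [(cls i (P.getLast hP).2, ls)]) ((cls i x'.2, x'.1 :: s1') :: rest1') := by
    rw [hdec, red_append, hpre, hlast, hr1']
  unfold Phi at heq
  rw [e1, e1'] at heq
  exact crux_blocks pre _ ls _ _ _ _ _ _ _ _ hch heq hcond

lemma crux_elem_nil (i : ℕ) (R R' : List (B × ℕ)) (x x' : B × ℕ)
    (heq : Phi i (x :: R) = Phi i (x' :: R')) :
    cls i x.2 = cls i x'.2 ∧ (cls i x.2 = 1 → x.1 = x'.1) := by
  unfold Phi at heq
  rw [show mp i (x :: R) = (cls i x.2, x.1) :: mp i R by simp [mp],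
      show mp i (x' :: R') = (cls i x'.2, x'.1) :: mp i R' by simp [mp]] at heq
  exact crux_nil _ _ _ _ _ _ heq

/-! ### visible content: letters with origin `i` -/

lemma filterMap_er (bs : List (ℕ × List B)) :
    (bs.map er).filterMap Prod.snd = (bs.filter (fun b => b.1 == 1)).map Prod.snd := by
  induction bs with
  | nil => rfl
  | cons b bs ih =>
    by_cases h : b.1 = 1 <;>
      simp [er, h, List.filterMap_cons, List.filter_cons, ih]

def FF (q : ℕ → Bool) (Y : List (ℕ × List B)) : List B :=
  ((Y.filter (fun b => q b.1)).map Prod.snd).flatten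

lemma FF_cons (q : ℕ → Bool) (y : ℕ × List B) (r : List (ℕ × List B)) :
    FF q (y :: r) = (if q y.1 then y.2 else []) ++ FF q r := by
  by_cases h : q y.1 <;> simp [FF, List.filter_cons, h]

lemma FF_gcons (q : ℕ → Bool) (z : ℕ × List B) (X : List (ℕ × List B)) :
    FF q (gcons z X) = (if q z.1 then z.2 else []) ++ FF q X := by
  cases X with
  | nil =>
    show FF q [z] = _
    rw [FF_cons]
  | cons y r =>
    by_cases h : z.1 = y.1
    · rw [show gcons z (y :: r) = (z.1, z.2 ++ y.2) :: r by simp [gcons, h], FF_cons, FF_cons]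
      simp only [h]
      by_cases hq : q y.1 <;> simp [hq, List.append_assoc]
    · rw [show gcons z (y :: r) = z :: y :: r by simp [gcons, h], FF_cons]

lemma FF_red (q : ℕ → Bool) (m : List (ℕ × B)) :
    FF q (red m) = (m.filter (fun z => q z.1)).map Prod.snd := by
  induction m with
  | nil => simp [FF, red]
  | cons x t ih =>
    rw [show red (x :: t) = gcons (x.1, [x.2]) (red t) from rfl, FF_gcons, ih]
    by_cases h : q x.1 <;> simp [List.filter_cons, h]

lemma visible_Phi (i : ℕ) (L : List (B × ℕ)) :
    ((Phi i L).filterMap Prod.snd).flatten = (L.filter (fun p => p.2 == i)).map Prod.fst := by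
  unfold Phi
  rw [filterMap_er]
  show FF (fun c => c == 1) (red (mp i L)) = _
  rw [FF_red]
  unfold mp
  rw [List.filter_map, List.map_map]
  congr 1
  apply List.filter_congr
  intro p _
  simp [Function.comp, cls_eq_one_iff]


/-! ### length via per-origin counts -/

lemma length_eq_sum (n : ℕ) (L : List (B × ℕ)) (hL : ∀ p ∈ L, p.2 < n) :
    L.length = ∑ i ∈ Finset.range n, (L.filter (fun p => p.2 == i)).length := by
  induction L with
  | nil => simp
  | cons p t ih =>
    have hp : p.2 < n := hL p (by simp)
    have ih' := ih (fun q hq => hL q (by simp [hq]))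
    have hstep : ∀ i, ((p :: t).filter (fun q => q.2 == i)).length
        = (if p.2 = i then 1 else 0) + (t.filter (fun q => q.2 == i)).length := by
      intro i; by_cases h : p.2 = i <;> simp [List.filter_cons, h] <;> omega
    simp only [hstep]
    rw [Finset.sum_add_distrib]
    have hone : (∑ i ∈ Finset.range n, if p.2 = i then 1 else 0) = 1 := by
      rw [Finset.sum_ite_eq]
      simp [hp]
    rw [hone, ← ih', List.length_cons]
    omega

/-! ### main reconstruction -/

theorem main_rec (n : ℕ) (L L' : List (B × ℕ))
    (hL : ∀ p ∈ L, p.2 < n) (hL' : ∀ p ∈ L', p.2 < n)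
    (H : ∀ i < n, Phi i L = Phi i L') : L = L' := by
  have hfil : ∀ i < n, (L.filter (fun p => p.2 == i)).map Prod.fst
      = (L'.filter (fun p => p.2 == i)).map Prod.fst := by
    intro i hi; rw [← visible_Phi, ← visible_Phi, H i hi]
  have hlen : L.length = L'.length := by
    rw [length_eq_sum n L hL, length_eq_sum n L' hL']
    apply Finset.sum_congr rfl
    intro i hi
    have := congrArg List.length (hfil i (Finset.mem_range.mp hi))
    simpa using this
  have htake : ∀ j, L.take j = L'.take j := by
    intro j
    induction j with
    | zero => rfl
    | succ j ihj =>
      by_cases hj : j < L.length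
      · have hj' : j < L'.length := hlen ▸ hj
        have hdL : L = L.take j ++ L[j] :: L.drop (j + 1) := by
          conv_lhs => rw [← List.take_append_drop j L, List.drop_eq_getElem_cons hj]
        have hdL' : L' = L.take j ++ L'[j] :: L'.drop (j + 1) := by
          conv_lhs => rw [← List.take_append_drop j L', List.drop_eq_getElem_cons hj']
          rw [ihj]
        have hox : (L[j]'hj).2 < n := hL _ (List.getElem_mem hj)
        have hox' : (L'[j]'hj').2 < n := hL' _ (List.getElem_mem hj')
        have key : L[j]'hj = L'[j]'hj' := by
          rcases Nat.eq_zero_or_pos j with hj0 | hjpos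
          · -- first element
            subst hj0
            have e1 : L = L[0] :: L.drop 1 := by simpa using hdL
            have e1' : L' = L'[0] :: L'.drop 1 := by simpa using hdL'
            have heq : Phi ((L[0]'hj).2) (L[0] :: L.drop 1) =
                Phi ((L[0]'hj).2) (L'[0] :: L'.drop 1) := by
              rw [← e1, ← e1']; exact H _ hox
            obtain ⟨h1, h2⟩ := crux_elem_nil _ _ _ _ _ heq
            have hsnd : (L'[0]'hj').2 = (L[0]'hj).2 :=
              cls_eq_one_iff.mp (by rw [← h1]; exact cls_self _)
            rw [Prod.ext_iff]
            exact ⟨h2 (cls_self _), hsnd.symm⟩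
          · -- later element: use the last element of the prefix
            set P := L.take j with hP
            have hPlen : P.length = j := by rw [hP, List.length_take]; omega
            have hPne : P ≠ [] := by
              intro hc; rw [hc] at hPlen; simp at hPlen; omega
            set op := (P.getLast hPne).2 with hopdef
            have hop : op < n := hL _ (List.take_subset j L (List.getLast_mem hPne))
            have cr : ∀ i, i < n →
                (cls i op = 1 ∨ (cls i (L[j]'hj).2 ≠ cls i op ∧ cls i (L'[j]'hj').2 ≠ cls i op)) →
                cls i (L[j]'hj).2 = cls i (L'[j]'hj').2 ∧
                  (cls i (L[j]'hj).2 = 1 → (L[j]'hj).1 = (L'[j]'hj').1) := by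
              intro i hi hcond
              refine crux_elem i P (L.drop (j + 1)) (L'.drop (j + 1)) _ _ hPne ?_ hcond
              rw [← hdL, ← hdL']
              exact H i hi
            obtain ⟨h1, h1f⟩ := cr op hop (Or.inl (cls_self op))
            by_cases hoo : (L[j]'hj).2 = op
            · have hc1 : cls op (L[j]'hj).2 = 1 := by rw [hoo]; exact cls_self op
              have hsnd : (L'[j]'hj').2 = op := cls_eq_one_iff.mp (by rw [← h1]; exact hc1)
              rw [Prod.ext_iff]
              exact ⟨h1f hc1, by rw [hoo, hsnd]⟩
            · rcases Nat.lt_trichotomy (L[j]'hj).2 op with hlt | heqq | hgt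
              · -- both origins below op
                have hz : cls op (L[j]'hj).2 = 0 := cls_of_lt hlt
                have hlt' : (L'[j]'hj').2 < op := lt_of_cls_eq_zero (by rw [← h1]; exact hz)
                set i' := max (L[j]'hj).2 (L'[j]'hj').2 with hi'def
                have hmax : i' < op := Nat.max_lt.mpr ⟨hlt, hlt'⟩
                have hi'n : i' < n := hmax.trans hop
                have hcop : cls i' op = 2 := cls_of_gt hmax
                have hcnd1 : cls i' (L[j]'hj).2 ≠ cls i' op := by
                  rw [hcop]; intro hcon
                  have := gt_of_cls_eq_two hcon
                  have := Nat.le_max_left (L[j]'hj).2 (L'[j]'hj').2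
                  omega
                have hcnd2 : cls i' (L'[j]'hj').2 ≠ cls i' op := by
                  rw [hcop]; intro hcon
                  have := gt_of_cls_eq_two hcon
                  have := Nat.le_max_right (L[j]'hj).2 (L'[j]'hj').2
                  omega
                obtain ⟨g1, g2⟩ := cr i' hi'n (Or.inr ⟨hcnd1, hcnd2⟩)
                have hsnd : (L[j]'hj).2 = (L'[j]'hj').2 := by
                  rcases Nat.le_total (L[j]'hj).2 (L'[j]'hj').2 with hle | hle
                  · have hieq : i' = (L'[j]'hj').2 := Nat.max_eq_right hle
                    have : cls i' (L[j]'hj).2 = 1 := by rw [g1, hieq]; exact cls_self _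
                    rw [cls_eq_one_iff.mp this, hieq]
                  · have hieq : i' = (L[j]'hj).2 := Nat.max_eq_left hle
                    have : cls i' (L'[j]'hj').2 = 1 := by rw [← g1, hieq]; exact cls_self _
                    rw [cls_eq_one_iff.mp this, hieq]
                have hcn1 : cls (L[j]'hj).2 (L[j]'hj).2 ≠ cls (L[j]'hj).2 op := by
                  rw [cls_self, cls_of_gt hlt]; omega
                have hcn2 : cls (L[j]'hj).2 (L'[j]'hj').2 ≠ cls (L[j]'hj).2 op := by
                  rw [← hsnd, cls_self, cls_of_gt hlt]; omega
                have hfst := (cr _ hox (Or.inr ⟨hcn1, hcn2⟩)).2 (cls_self _)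
                rw [Prod.ext_iff]
                exact ⟨hfst, hsnd⟩
              · exact absurd heqq hoo
              · -- both origins above op
                have hz : cls op (L[j]'hj).2 = 2 := cls_of_gt hgt
                have hgt' : op < (L'[j]'hj').2 := gt_of_cls_eq_two (by rw [← h1]; exact hz)
                set i' := min (L[j]'hj).2 (L'[j]'hj').2 with hi'def
                have hmin : op < i' := Nat.lt_min.mpr ⟨hgt, hgt'⟩
                have hi'n : i' < n := by
                  have := Nat.min_le_left (L[j]'hj).2 (L'[j]'hj').2
                  omega
                have hcop : cls i' op = 0 := cls_of_lt hmin
                have hcnd1 : cls i' (L[j]'hj).2 ≠ cls i' op := by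
                  rw [hcop]; intro hcon
                  have := lt_of_cls_eq_zero hcon
                  have := Nat.min_le_left (L[j]'hj).2 (L'[j]'hj').2
                  omega
                have hcnd2 : cls i' (L'[j]'hj').2 ≠ cls i' op := by
                  rw [hcop]; intro hcon
                  have := lt_of_cls_eq_zero hcon
                  have := Nat.min_le_right (L[j]'hj).2 (L'[j]'hj').2
                  omega
                obtain ⟨g1, g2⟩ := cr i' hi'n (Or.inr ⟨hcnd1, hcnd2⟩)
                have hsnd : (L[j]'hj).2 = (L'[j]'hj').2 := by
                  rcases Nat.le_total (L[j]'hj).2 (L'[j]'hj').2 with hle | hle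
                  · have hieq : i' = (L[j]'hj).2 := Nat.min_eq_left hle
                    have : cls i' (L'[j]'hj').2 = 1 := by rw [← g1, hieq]; exact cls_self _
                    rw [cls_eq_one_iff.mp this, hieq]
                  · have hieq : i' = (L'[j]'hj').2 := Nat.min_eq_right hle
                    have : cls i' (L[j]'hj).2 = 1 := by rw [g1, hieq]; exact cls_self _
                    rw [cls_eq_one_iff.mp this, hieq]
                have hcn1 : cls (L[j]'hj).2 (L[j]'hj).2 ≠ cls (L[j]'hj).2 op := by
                  rw [cls_self, cls_of_lt hgt]; omega
                have hcn2 : cls (L[j]'hj).2 (L'[j]'hj').2 ≠ cls (L[j]'hj).2 op := by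
                  rw [← hsnd, cls_self, cls_of_lt hgt]; omega
                have hfst := (cr _ hox (Or.inr ⟨hcn1, hcn2⟩)).2 (cls_self _)
                rw [Prod.ext_iff]
                exact ⟨hfst, hsnd⟩
        rw [List.take_succ, List.take_succ, ihj, List.getElem?_eq_getElem hj,
          List.getElem?_eq_getElem hj', key]
      · have hj' : ¬ j < L'.length := by omega
        rw [List.take_of_length_le (by omega), List.take_of_length_le (by omega)]
        have e1 : L.take j = L := List.take_of_length_le (by omega)
        have e2 : L'.take j = L' := List.take_of_length_le (by omega)
        rw [← e1, ← e2, ihj]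
  have := htake L.length
  rw [List.take_length, hlen, List.take_length] at this
  exact this

end StsAux


lemma partOf_eq {i n o : ℕ} (hi : i < n) (ho : o < n) :
    partOf [i, 1, n - (i + 1)] o = StsAux.cls i o := by
  simp only [partOf, StsAux.cls]
  split_ifs <;> omega

lemma charVal_eq_Phi {A B : Type} (f : List A → List (B × ℕ)) (hf : HasOrigins f)
    (w : List A) (i : ℕ) (hi : i < w.length) :
    charVal f (w[i]'hi) (w.take i) (w.drop (i + 1)) = StsAux.Phi i (f w) := by
  have hflat : (List.flatten [w.take i, [w[i]'hi], w.drop (i + 1)]) = w := by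
    show w.take i ++ ([w[i]'hi] ++ (w.drop (i + 1) ++ [])) = w
    rw [List.append_nil, List.singleton_append, ← List.drop_eq_getElem_cons hi,
      List.take_append_drop]
  have hlens : ([w.take i, [w[i]'hi], w.drop (i + 1)]).map List.length
      = [i, 1, w.length - (i + 1)] := by
    simp [List.length_take, Nat.min_eq_left (Nat.le_of_lt hi)]
  unfold charVal factored blocksOf
  rw [hflat, hlens]
  have hcl : (f w).map (fun p => (partOf [i, 1, w.length - (i + 1)] p.2, p.1))
      = StsAux.mp i (f w) := by
    apply List.map_congr_left
    intro p hp
    rw [partOf_eq hi (hf w p hp)]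
  rw [hcl,
    show (fun blk : List (ℕ × B) => ((blk.map Prod.fst).headD 0, blk.map Prod.snd))
      = StsAux.Fblk from rfl,
    StsAux.splitBy_blocks]
  show _ = (StsAux.red (StsAux.mp i (f w))).map StsAux.er
  apply List.map_congr_left
  intro b _
  by_cases hb : b.1 = 1 <;> simp [StsAux.er, hb]


/-- A string-to-string function with origin information is uniquely determined by its
characteristic function `(v, a, w) ↦ f(v̄ | a | w̄)`. -/
theorem determined_by_characteristic {A B : Type}
    (f g : List A → List (B × ℕ)) (hf : HasOrigins f) (hg : HasOrigins g)
    (h : ∀ (a : A) (v w : List A), charVal f a v w = charVal g a v w) :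
    ∀ w : List A, f w = g w := by
  intro w
  rcases List.eq_nil_or_concat w with hw | ⟨_, _, hw⟩
  · subst hw
    have h1 : f [] = [] := List.eq_nil_iff_forall_not_mem.mpr
      (fun p hp => absurd (hf [] p hp) (by simp))
    have h2 : g [] = [] := List.eq_nil_iff_forall_not_mem.mpr
      (fun p hp => absurd (hg [] p hp) (by simp))
    rw [h1, h2]
  · have hn : 0 < w.length := by subst hw; simp
    apply StsAux.main_rec w.length (f w) (g w) (hf w) (hg w)
    intro i hi
    rw [← charVal_eq_Phi f hf w i hi, ← charVal_eq_Phi g hg w i hi]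
    exact h _ _ _
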